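/- arXiv:math/0412456 — 2 statements merged into one kernel-verified Lean document; each statement's English description precedes it below -/
import Mathlib

section
/- For all n, sum over beta in B_n of q^{|g(beta)|} t^{|g^(beta)|} equals sum over beta in B_n of q^{fmaj(beta)} t^{n^2 - fmaj(beta^{-1})}, where |g(beta)| = sum_i g_i(beta) and |g^(beta)| = sum_i (2 mu_{sigma(i)}(beta) + epsilon_i(beta)) with mu_i(beta) = #{k in Ris(beta^{-1}) : k < i} and Ris the rise set. -/
open scoped Classical

/-- The hyperoctahedral group `B_n`, modeled as pairs (permutation, sign vector),
i.e. the wreath product `ℤ₂ ≀ S_n`.  `β.2 i = true` means the entry at position `i`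
is negative. -/
abbrev HO (n : ℕ) := Equiv.Perm (Fin n) × (Fin n → Bool)

namespace HO

/-- The inverse signed permutation. -/
noncomputable def inv {n : ℕ} (β : HO n) : HO n := (β.1⁻¹, fun i => β.2 (β.1⁻¹ i))

/-- One-line notation (1-indexed): the signed value `β(i) ∈ {±1,…,±n}` for `1 ≤ i ≤ n`,
and `0` outside this range. -/
noncomputable def val {n : ℕ} (β : HO n) (i : ℕ) : ℤ :=
  if h : 1 ≤ i ∧ i ≤ n then
    (if β.2 ⟨i - 1, by omega⟩ then -(((β.1 ⟨i - 1, by omega⟩ : Fin n) : ℕ) + 1 : ℤ)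
     else (((β.1 ⟨i - 1, by omega⟩ : Fin n) : ℕ) + 1 : ℤ))
  else 0

/-- The order `-1 ≺ -2 ≺ ⋯ ≺ -n ≺ ⋯ ≺ 0 ≺ 1 ≺ 2 ≺ ⋯` on `ℤ`:
`bprec a b` means `a ≺ b`. -/
noncomputable def bprec (a b : ℤ) : Prop :=
  (a < 0 ∧ b < 0 ∧ -a < -b) ∨ (a < 0 ∧ 0 ≤ b) ∨ (0 ≤ a ∧ 0 ≤ b ∧ a < b)

/-- Descent set of `β` with respect to the order `≺`. -/
noncomputable def Des {n : ℕ} (β : HO n) : Finset ℕ :=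
  (Finset.Icc 1 (n - 1)).filter fun i => bprec (val β (i + 1)) (val β i)

/-- Rise set of `β` with respect to the order `≺`. -/
noncomputable def Ris {n : ℕ} (β : HO n) : Finset ℕ :=
  (Finset.Icc 1 (n - 1)).filter fun i => bprec (val β i) (val β (i + 1))

/-- Major index. -/
noncomputable def maj {n : ℕ} (β : HO n) : ℕ := ∑ i ∈ Des β, i

/-- Number of negative entries. -/
noncomputable def neg {n : ℕ} (β : HO n) : ℕ :=
  ((Finset.Icc 1 n).filter fun i => val β i < 0).card

/-- The flag-major index `fmaj β = 2 maj β + neg β`. -/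
noncomputable def fmaj {n : ℕ} (β : HO n) : ℕ := 2 * maj β + neg β

/-- `δ_i(β) = #{j ∈ Des(β) : j < i}`. -/
noncomputable def deltaStat {n : ℕ} (β : HO n) (i : ℕ) : ℕ := ((Des β).filter fun j => j < i).card

/-- `d_i(β) = #{j ∈ Des(β) : j ≥ i}`. -/
noncomputable def dStat {n : ℕ} (β : HO n) (i : ℕ) : ℕ := ((Des β).filter fun j => i ≤ j).card

/-- `ε_i(β) = 1` if `β(i) < 0`, else `0`. -/
noncomputable def epsStat {n : ℕ} (β : HO n) (i : ℕ) : ℕ := if val β i < 0 then 1 else 0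

/-- `η_i(β) = 1` if `β(i) > 0`, else `0`. -/
noncomputable def etaStat {n : ℕ} (β : HO n) (i : ℕ) : ℕ := if 0 < val β i then 1 else 0

/-- `g_i(β) = 2 δ_i(β) + η_i(β)`. -/
noncomputable def gstat {n : ℕ} (β : HO n) (i : ℕ) : ℕ := 2 * deltaStat β i + etaStat β i

/-- `f_i(β) = 2 d_i(β) + ε_i(β)` (so that `fmaj β = ∑ f_i(β)`). -/
noncomputable def fStat {n : ℕ} (β : HO n) (i : ℕ) : ℕ := 2 * dStat β i + epsStat β i

/-- `μ_i(β) = #{k ∈ Ris(β⁻¹) : k < i}`. -/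
noncomputable def muStat {n : ℕ} (β : HO n) (i : ℕ) : ℕ := ((Ris (inv β)).filter fun k => k < i).card

/-- `ĝ_i(β) = 2 μ_{σ(i)}(β) + ε_i(β)`, where `σ(i) = |β(i)|`. -/
noncomputable def ghat {n : ℕ} (β : HO n) (i : ℕ) : ℕ :=
  2 * muStat β (val β i).natAbs + epsStat β i

namespace X17
variable {n : ℕ}

/-- The bijection φ(β) = (-w₀) ∘ β ∘ w₀. -/
noncomputable def phi (β : HO n) : HO n :=
  (Fin.revPerm * β.1 * Fin.revPerm, fun i => ! β.2 i.rev)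

lemma phi_involutive : Function.Involutive (phi (n := n)) := by
  intro β
  ext i
  · simp [phi, Fin.rev_rev]
  · simp [phi, Fin.rev_rev]

lemma val_eq (β : HO n) (i : ℕ) (h : 1 ≤ i ∧ i ≤ n) :
    val β i = if β.2 ⟨i - 1, by omega⟩ then -(((β.1 ⟨i - 1, by omega⟩ : Fin n) : ℕ) + 1 : ℤ)
      else (((β.1 ⟨i - 1, by omega⟩ : Fin n) : ℕ) + 1 : ℤ) := dif_pos h

lemma val_eq' (β : HO n) (i : ℕ) (h1 : 1 ≤ i) (h2 : i ≤ n) (k : Fin n) (hk : (k : ℕ) = i - 1) :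
    val β i = if β.2 k then -((β.1 k : ℤ) + 1) else ((β.1 k : ℤ) + 1) := by
  have hk' : (⟨i - 1, by omega⟩ : Fin n) = k := Fin.ext hk.symm
  rw [val_eq β i ⟨h1, h2⟩, hk']

lemma val_phi (β : HO n) (i : ℕ) (h1 : 1 ≤ i) (h2 : i ≤ n) (k : Fin n) (hk : (k : ℕ) = n - i) :
    val (phi β) i = if β.2 k then ((n : ℤ) - (β.1 k : ℕ)) else -((n : ℤ) - (β.1 k : ℕ)) := by
  have hrk : ((⟨i - 1, by omega⟩ : Fin n).rev : ℕ) = (k : ℕ) := by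
    rw [Fin.val_rev]
    show n - (i - 1 + 1) = (k : ℕ)
    omega
  have hrk' : (⟨i - 1, by omega⟩ : Fin n).rev = k := Fin.ext hrk
  rw [val_eq' (phi β) i h1 h2 ⟨i - 1, by omega⟩ rfl]
  simp only [phi, Equiv.Perm.mul_apply, Fin.revPerm_apply, hrk']
  have hv : ((β.1 k).rev : ℤ) = (n : ℤ) - (β.1 k : ℕ) - 1 := by
    have := Fin.val_rev (β.1 k)
    have hb := (β.1 k).isLt
    omega
  rcases hb : β.2 k <;> simp [hb, hv] <;> omega

lemma val_natAbs (β : HO n) (i : ℕ) (h1 : 1 ≤ i) (h2 : i ≤ n) :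
    (val β i).natAbs = (β.1 ⟨i - 1, by omega⟩ : ℕ) + 1 := by
  rw [val_eq β i ⟨h1, h2⟩]
  split <;> omega

lemma val_ne_zero (β : HO n) (i : ℕ) (h1 : 1 ≤ i) (h2 : i ≤ n) : val β i ≠ 0 := by
  have := val_natAbs β i h1 h2
  omega

/-- Order-reversal behaviour of bprec under the flip. -/
lemma bprec_flip (a a' : ℕ) (b b' : Bool) (ha : a < n) (ha' : a' < n) (hne : a ≠ a') :
    (bprec (if b' then ((n : ℤ) - a') else -((n : ℤ) - a'))
           (if b then ((n : ℤ) - a) else -((n : ℤ) - a))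
      ↔ bprec (if b then -((a : ℤ) + 1) else ((a : ℤ) + 1))
              (if b' then -((a' : ℤ) + 1) else ((a' : ℤ) + 1))) := by
  unfold bprec
  have h1 : (a : ℤ) < n := by exact_mod_cast ha
  have h2 : (a' : ℤ) < n := by exact_mod_cast ha'
  have h3 : (a : ℤ) ≠ a' := by exact_mod_cast hne
  rcases b <;> rcases b' <;> simp <;> omega

lemma mem_Des_iff (β : HO n) (j : ℕ) :
    j ∈ Des β ↔ (1 ≤ j ∧ j ≤ n - 1) ∧ bprec (val β (j + 1)) (val β j) := by
  simp [Des, Finset.mem_filter, Finset.mem_Icc, and_assoc]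

lemma mem_Ris_iff (β : HO n) (j : ℕ) :
    j ∈ Ris β ↔ (1 ≤ j ∧ j ≤ n - 1) ∧ bprec (val β j) (val β (j + 1)) := by
  simp [Ris, Finset.mem_filter, Finset.mem_Icc, and_assoc]

lemma mem_Des_phi (β : HO n) (j : ℕ) (h1 : 1 ≤ j) (h2 : j ≤ n - 1) :
    j ∈ Des (phi β) ↔ (n - j) ∈ Des β := by
  have hn : 2 ≤ n := by omega
  have hk1 : n - j < n := by omega
  have hk2 : n - j - 1 < n := by omega
  set k : Fin n := ⟨n - j, hk1⟩ with hkdef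
  set k' : Fin n := ⟨n - j - 1, hk2⟩ with hk'def
  have hkk' : k ≠ k' := by
    simp only [k, k', Fin.ne_iff_vne]
    omega
  have e1 : val (phi β) j = if β.2 k then ((n : ℤ) - (β.1 k : ℕ)) else -((n : ℤ) - (β.1 k : ℕ)) :=
    val_phi β j h1 (by omega) k (show n - j = n - j from rfl)
  have e2 : val (phi β) (j + 1)
      = if β.2 k' then ((n : ℤ) - (β.1 k' : ℕ)) else -((n : ℤ) - (β.1 k' : ℕ)) :=
    val_phi β (j + 1) (by omega) (by omega) k' (show n - j - 1 = n - (j + 1) by omega)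
  have e3 : val β (n - j) = if β.2 k' then -((β.1 k' : ℤ) + 1) else ((β.1 k' : ℤ) + 1) :=
    val_eq' β (n - j) (by omega) (by omega) k' (show n - j - 1 = n - j - 1 from rfl)
  have e4 : val β (n - j + 1) = if β.2 k then -((β.1 k : ℤ) + 1) else ((β.1 k : ℤ) + 1) :=
    val_eq' β (n - j + 1) (by omega) (by omega) k (show n - j = n - j + 1 - 1 by omega)
  rw [mem_Des_iff, mem_Des_iff, e1, e2, e3, e4]
  have hinj : (β.1 k : ℕ) ≠ (β.1 k' : ℕ) := by
    intro h
    exact hkk' (β.1.injective (Fin.ext h))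
  constructor
  · rintro ⟨-, h⟩
    exact ⟨⟨by omega, by omega⟩,
      (bprec_flip (β.1 k) (β.1 k') (β.2 k) (β.2 k') (β.1 k).isLt (β.1 k').isLt hinj).mp h⟩
  · rintro ⟨-, h⟩
    exact ⟨⟨h1, h2⟩,
      (bprec_flip (β.1 k) (β.1 k') (β.2 k) (β.2 k') (β.1 k).isLt (β.1 k').isLt hinj).mpr h⟩

lemma card_Icc1 : (Finset.Icc 1 n).card = n := by rw [Nat.card_Icc]; omega

lemma neg_le (β : HO n) : neg β ≤ n := by
  calc neg β ≤ (Finset.Icc 1 n).card := Finset.card_filter_le _ _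
  _ = n := card_Icc1

lemma val_neg_iff (β : HO n) (i : ℕ) (h1 : 1 ≤ i) (h2 : i ≤ n) (k : Fin n)
    (hk : (k : ℕ) = i - 1) : val β i < 0 ↔ β.2 k = true := by
  rw [val_eq' β i h1 h2 k hk]
  rcases hb : β.2 k <;> simp <;> omega

lemma val_phi_neg_iff (β : HO n) (i : ℕ) (h1 : 1 ≤ i) (h2 : i ≤ n) :
    val (phi β) i < 0 ↔ ¬ (val β (n + 1 - i) < 0) := by
  have hki : n - i < n := by omega
  set k : Fin n := ⟨n - i, hki⟩
  have e1 : val (phi β) i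
      = if β.2 k then ((n : ℤ) - (β.1 k : ℕ)) else -((n : ℤ) - (β.1 k : ℕ)) :=
    val_phi β i h1 h2 k rfl
  have e2 : val β (n + 1 - i) < 0 ↔ β.2 k = true :=
    val_neg_iff β (n + 1 - i) (by omega) (by omega) k (by show n - i = n + 1 - i - 1; omega)
  have hlt : (β.1 k : ℤ) < (n : ℤ) := by exact_mod_cast (β.1 k).isLt
  rw [e1, e2]
  rcases hb : β.2 k <;> simp <;> omega

lemma neg_phi (β : HO n) : neg (phi β) = n - neg β := by
  unfold neg
  have key : ((Finset.Icc 1 n).filter fun i => val (phi β) i < 0).card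
      = ((Finset.Icc 1 n).filter fun i => ¬ (val β i < 0)).card := by
    apply Finset.card_nbij' (fun i => n + 1 - i) (fun i => n + 1 - i)
    · intro a ha
      simp only [Finset.mem_coe, Finset.mem_filter, Finset.mem_Icc] at ha ⊢
      obtain ⟨⟨ha1, ha2⟩, hv⟩ := ha
      exact ⟨⟨by omega, by omega⟩, (val_phi_neg_iff β a ha1 ha2).mp hv⟩
    · intro a ha
      simp only [Finset.mem_coe, Finset.mem_filter, Finset.mem_Icc] at ha ⊢
      obtain ⟨⟨ha1, ha2⟩, hv⟩ := ha
      refine ⟨⟨by omega, by omega⟩, ?_⟩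
      have := val_phi_neg_iff β (n + 1 - a) (by omega) (by omega)
      rw [show n + 1 - (n + 1 - a) = a by omega] at this
      exact this.mpr hv
    · intro a ha
      simp only [Finset.mem_coe, Finset.mem_filter, Finset.mem_Icc] at ha
      dsimp only
      omega
    · intro a ha
      simp only [Finset.mem_coe, Finset.mem_filter, Finset.mem_Icc] at ha
      dsimp only
      omega
  rw [key]
  have h2 := Finset.card_filter_add_card_filter_not
    (s := Finset.Icc 1 n) (fun i => val β i < 0)
  have h3 : (Finset.Icc 1 n).card = n := card_Icc1
  omega

lemma sum_eps (β : HO n) : ∑ i ∈ Finset.Icc 1 n, epsStat β i = neg β := by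
  unfold epsStat neg
  rw [Finset.card_filter]

lemma sum_eta (β : HO n) : ∑ i ∈ Finset.Icc 1 n, etaStat β i = n - neg β := by
  have key : ∑ i ∈ Finset.Icc 1 n, (etaStat β i + epsStat β i) = n := by
    have e : ∀ i ∈ Finset.Icc 1 n, etaStat β i + epsStat β i = 1 := by
      intro i hi
      simp only [Finset.mem_Icc] at hi
      have hnz := val_ne_zero β i hi.1 hi.2
      unfold etaStat epsStat
      split <;> split <;> omega
    rw [Finset.sum_congr rfl e, Finset.sum_const, card_Icc1, smul_eq_mul, mul_one]
  rw [Finset.sum_add_distrib, sum_eps] at key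
  have := neg_le β
  omega

lemma sum_card_filter_lt (S : Finset ℕ) (hS : ∀ k ∈ S, 1 ≤ k ∧ k ≤ n) :
    ∑ i ∈ Finset.Icc 1 n, ((S.filter fun j => j < i).card) = ∑ k ∈ S, (n - k) := by
  have e : ∀ i, ((S.filter fun j => j < i).card) = ∑ k ∈ S, if k < i then 1 else 0 :=
    fun i => Finset.card_filter _ _
  rw [Finset.sum_congr rfl (fun i _ => e i), Finset.sum_comm]
  apply Finset.sum_congr rfl
  intro k hk
  obtain ⟨h1, h2⟩ := hS k hk
  rw [← Finset.card_filter]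
  have e2 : (Finset.Icc 1 n).filter (fun i => k < i) = Finset.Icc (k + 1) n := by
    ext x
    simp only [Finset.mem_filter, Finset.mem_Icc]
    omega
  rw [e2, Nat.card_Icc]
  omega

lemma Des_subset (β : HO n) : ∀ j ∈ Des β, 1 ≤ j ∧ j ≤ n - 1 :=
  fun j hj => ((mem_Des_iff β j).mp hj).1

lemma Ris_subset (β : HO n) : ∀ j ∈ Ris β, 1 ≤ j ∧ j ≤ n - 1 :=
  fun j hj => ((mem_Ris_iff β j).mp hj).1

lemma maj_phi (β : HO n) : maj (phi β) = ∑ j ∈ Des β, (n - j) := by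
  unfold maj
  apply Finset.sum_nbij' (fun j => n - j) (fun j => n - j)
  · intro a ha
    obtain ⟨h1, h2⟩ := Des_subset _ a ha
    exact (mem_Des_phi β a h1 h2).mp ha
  · intro a ha
    obtain ⟨h1, h2⟩ := Des_subset _ a ha
    have := (mem_Des_phi β (n - a) (by omega) (by omega)).mpr
    rw [show n - (n - a) = a by omega] at this
    exact this ha
  · intro a ha
    obtain ⟨h1, h2⟩ := Des_subset _ a ha
    omega
  · intro a ha
    obtain ⟨h1, h2⟩ := Des_subset _ a ha
    omega
  · intro a ha
    obtain ⟨h1, h2⟩ := Des_subset _ a ha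
    omega

lemma bprec_total (a b : ℤ) (ha : a ≠ 0) (hb : b ≠ 0) (hne : a.natAbs ≠ b.natAbs) :
    bprec a b ↔ ¬ bprec b a := by
  unfold bprec
  omega

lemma natAbs_ne (β : HO n) (j : ℕ) (h1 : 1 ≤ j) (h2 : j ≤ n - 1) :
    (val β j).natAbs ≠ (val β (j + 1)).natAbs := by
  rw [val_natAbs β j h1 (by omega), val_natAbs β (j + 1) (by omega) (by omega)]
  intro h
  have h' : β.1 ⟨j - 1, by omega⟩ = β.1 ⟨j + 1 - 1, by omega⟩ := Fin.ext (by omega)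
  have := β.1.injective h'
  rw [Fin.mk.injEq] at this
  omega

lemma Ris_eq (β : HO n) :
    Ris β = (Finset.Icc 1 (n - 1)).filter fun j => ¬ bprec (val β (j + 1)) (val β j) := by
  unfold Ris
  apply Finset.filter_congr
  intro j hj
  simp only [Finset.mem_Icc] at hj
  have hz1 := val_ne_zero β j hj.1 (by omega)
  have hz2 := val_ne_zero β (j + 1) (by omega) (by omega)
  exact bprec_total _ _ hz1 hz2 (natAbs_ne β j hj.1 hj.2)

lemma des_ris_sum (β : HO n) :
    ∑ j ∈ Des β, (n - j) + ∑ k ∈ Ris β, (n - k) = ∑ k ∈ Finset.Icc 1 (n - 1), (n - k) := by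
  rw [Ris_eq]
  exact Finset.sum_filter_add_sum_filter_not _ _ _

lemma gauss : 2 * (∑ k ∈ Finset.Icc 1 (n - 1), (n - k)) + n = n ^ 2 := by
  have h : ∑ k ∈ Finset.Icc 1 (n - 1), (n - k) = ∑ k ∈ Finset.Icc 1 (n - 1), k := by
    apply Finset.sum_nbij' (fun k => n - k) (fun k => n - k) <;>
      (intro a ha <;> simp only [Finset.mem_Icc] at ha ⊢ <;> omega)
  have h2 : (∑ k ∈ Finset.Icc 1 (n - 1), (n - k)) + (∑ k ∈ Finset.Icc 1 (n - 1), k)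
      = (n - 1) * n := by
    rw [← Finset.sum_add_distrib,
      Finset.sum_congr rfl (fun k hk => by
        simp only [Finset.mem_Icc] at hk
        omega : ∀ k ∈ Finset.Icc 1 (n - 1), (n - k) + k = n),
      Finset.sum_const, Nat.card_Icc, smul_eq_mul]
    have e3 : n - 1 + 1 - 1 = n - 1 := by omega
    rw [e3]
  have h3 : (n - 1) * n + n = n ^ 2 := by
    rcases n with _ | m
    · simp
    · simp only [Nat.succ_sub_one]
      ring
  omega

lemma inv_phi (β : HO n) : inv (phi β) = phi (inv β) := by
  unfold inv phi
  have hrp : (Fin.revPerm : Equiv.Perm (Fin n))⁻¹ = Fin.revPerm := rfl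
  refine Prod.ext ?_ ?_
  · ext i
    simp [mul_inv_rev, hrp, Fin.revPerm_apply, Fin.val_rev, Fin.rev_rev]
  · funext i
    simp [mul_inv_rev, hrp, Fin.revPerm_apply, Fin.rev_rev]

lemma neg_eq_card_fin (β : HO n) :
    neg β = (Finset.univ.filter fun k : Fin n => β.2 k = true).card := by
  unfold neg
  refine Finset.card_bij'
    (fun a ha => (⟨a - 1, by
      simp only [Finset.mem_filter, Finset.mem_Icc] at ha; omega⟩ : Fin n))
    (fun k _ => (k : ℕ) + 1) ?_ ?_ ?_ ?_
  · intro a ha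
    simp only [Finset.mem_filter, Finset.mem_Icc] at ha
    obtain ⟨⟨h1, h2⟩, hv⟩ := ha
    simpa using (val_neg_iff β a h1 h2 _ rfl).mp hv
  · intro k hk
    simp only [Finset.mem_filter, Finset.mem_univ, true_and] at hk
    simp only [Finset.mem_filter, Finset.mem_Icc]
    have := k.isLt
    refine ⟨⟨by omega, by omega⟩, ?_⟩
    exact (val_neg_iff β ((k : ℕ) + 1) (by omega) (by omega) k (by omega)).mpr hk
  · intro a ha
    simp only [Finset.mem_filter, Finset.mem_Icc] at ha
    simp only [Fin.val_mk]
    omega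
  · intro k hk
    exact Fin.ext (by simp)

lemma neg_inv (β : HO n) : neg (inv β) = neg β := by
  rw [neg_eq_card_fin, neg_eq_card_fin]
  refine Finset.card_nbij' (fun k => β.1⁻¹ k) (fun k => β.1 k) ?_ ?_ ?_ ?_
  · intro a ha
    simp only [Finset.mem_coe, Finset.mem_filter, Finset.mem_univ, true_and, inv] at ha ⊢
    exact (Finset.mem_filter.mp ha).2
  · intro a ha
    simp only [Finset.mem_coe, Finset.mem_filter, Finset.mem_univ, true_and, inv] at ha ⊢
    exact Finset.mem_filter.mpr ⟨Finset.mem_univ _, by simpa using ha⟩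
  · intro a _; simp
  · intro a _; simp

lemma sum_mu_abs (β : HO n) :
    ∑ i ∈ Finset.Icc 1 n, muStat β (val β i).natAbs = ∑ m ∈ Finset.Icc 1 n, muStat β m := by
  refine Finset.sum_bij' (fun a _ => (val β a).natAbs)
    (fun m hm => ((β.1⁻¹ ⟨m - 1, by
      simp only [Finset.mem_Icc] at hm; omega⟩ : Fin n) : ℕ) + 1) ?_ ?_ ?_ ?_ ?_
  · intro a ha
    simp only [Finset.mem_Icc] at ha ⊢
    rw [val_natAbs β a ha.1 ha.2]
    have := (β.1 ⟨a - 1, by omega⟩).isLt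
    omega
  · intro m hm
    simp only [Finset.mem_Icc] at hm ⊢
    have := (β.1⁻¹ ⟨m - 1, by omega⟩).isLt
    omega
  · intro a ha
    simp only [Finset.mem_Icc] at ha
    have hv := val_natAbs β a ha.1 ha.2
    have hlt := (β.1 ⟨a - 1, by omega⟩).isLt
    have e : (⟨(val β a).natAbs - 1, by omega⟩ : Fin n) = β.1 ⟨a - 1, by omega⟩ :=
      Fin.ext (by simp only [Fin.val_mk]; omega)
    rw [e, Equiv.Perm.coe_inv, Equiv.symm_apply_apply]
    simp only [Fin.val_mk]
    omega
  · intro m hm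
    simp only [Finset.mem_Icc] at hm
    set x : Fin n := β.1⁻¹ ⟨m - 1, by omega⟩ with hx
    have hxlt := x.isLt
    have hv := val_natAbs β ((x : ℕ) + 1) (by omega) (by omega)
    have e : (⟨(x : ℕ) + 1 - 1, by omega⟩ : Fin n) = x := Fin.ext (by simp)
    rw [e] at hv
    rw [hv, hx, Equiv.Perm.coe_inv, Equiv.apply_symm_apply]
    simp only [Fin.val_mk]
    omega
  · intro a _
    rfl

lemma sum_gstat (β : HO n) : ∑ i ∈ Finset.Icc 1 n, gstat β i = fmaj (phi β) := by
  unfold gstat fmaj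
  rw [Finset.sum_add_distrib, ← Finset.mul_sum]
  unfold deltaStat
  rw [sum_card_filter_lt (Des β) (fun j hj => by have := Des_subset β j hj; omega),
    sum_eta, ← maj_phi, neg_phi]

lemma sum_ghat (β : HO n) : ∑ i ∈ Finset.Icc 1 n, ghat β i = n ^ 2 - fmaj (inv (phi β)) := by
  rw [inv_phi]
  unfold ghat
  rw [Finset.sum_add_distrib, ← Finset.mul_sum, sum_mu_abs, sum_eps]
  unfold muStat
  rw [sum_card_filter_lt (Ris (inv β)) (fun k hk => by have := Ris_subset _ k hk; omega)]
  have hf : fmaj (phi (inv β)) = 2 * (∑ j ∈ Des (inv β), (n - j)) + (n - neg (inv β)) := by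
    unfold fmaj
    rw [maj_phi, neg_phi]
  have hpart := des_ris_sum (inv β)
  have hg := gauss (n := n)
  have hneg := neg_inv β
  have hnle : neg (inv β) ≤ n := neg_le _
  obtain ⟨N, hN⟩ : ∃ N, n ^ 2 = N := ⟨_, rfl⟩
  rw [hN] at hg ⊢
  omega

end X17
end HO

/-- `∑_{β ∈ B_n} q^{|g(β)|} t^{|ĝ(β)|} = ∑_{β ∈ B_n} q^{fmaj β} t^{n² - fmaj(β⁻¹)}`,
as polynomials in `q = X 0` and `t = X 1`. -/
theorem gstat_ghat_generating_function (n : ℕ) :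
    ∑ β : HO n,
        (MvPolynomial.X 0 : MvPolynomial (Fin 2) ℚ) ^ (∑ i ∈ Finset.Icc 1 n, HO.gstat β i) *
          (MvPolynomial.X 1) ^ (∑ i ∈ Finset.Icc 1 n, HO.ghat β i)
      = ∑ β : HO n,
        (MvPolynomial.X 0 : MvPolynomial (Fin 2) ℚ) ^ HO.fmaj β *
          (MvPolynomial.X 1) ^ (n ^ 2 - HO.fmaj (HO.inv β)) := by
  rw [← Function.Bijective.sum_comp (HO.X17.phi_involutive (n := n)).bijective
      (fun β => (MvPolynomial.X 0 : MvPolynomial (Fin 2) ℚ) ^ HO.fmaj β *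
        (MvPolynomial.X 1) ^ (n ^ 2 - HO.fmaj (HO.inv β)))]
  apply Finset.sum_congr rfl
  intro β _
  rw [HO.X17.sum_gstat, HO.X17.sum_ghat]
end

section
/- For each beta in B_n, the image of the compact e-diagram under psi equals the compact o-diagram: psi(D_beta) = D_beta^s, where psi sends (g(beta), g~(beta)) to (g(beta), c(beta) - g~(beta)) with c_i(beta) = 2|beta(i)| - 1; in particular all cells of psi(D_beta) have odd coordinate sum and are distinct. -/
open scoped Classical

namespace HO

variable {n : ℕ}

lemma val_def (β : HO n) {i : ℕ} (h1 : 1 ≤ i) (h2 : i ≤ n) :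
    val β i = if β.2 ⟨i - 1, by omega⟩ then -(((β.1 ⟨i - 1, by omega⟩ : Fin n) : ℕ) + 1 : ℤ)
     else (((β.1 ⟨i - 1, by omega⟩ : Fin n) : ℕ) + 1 : ℤ) := dif_pos ⟨h1, h2⟩

lemma natAbs_val (β : HO n) {i : ℕ} (h1 : 1 ≤ i) (h2 : i ≤ n) :
    (val β i).natAbs = ((β.1 ⟨i - 1, by omega⟩ : Fin n) : ℕ) + 1 := by
  rw [val_def β h1 h2]; split <;> omega

lemma val_neg_iff (β : HO n) {i : ℕ} (h1 : 1 ≤ i) (h2 : i ≤ n) :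
    val β i < 0 ↔ β.2 ⟨i - 1, by omega⟩ = true := by
  rw [val_def β h1 h2]; split <;> simp_all <;> omega

lemma val_ne_zero (β : HO n) {i : ℕ} (h1 : 1 ≤ i) (h2 : i ≤ n) : val β i ≠ 0 := by
  have := natAbs_val β h1 h2; omega

lemma natAbs_val_mem (β : HO n) {i : ℕ} (h1 : 1 ≤ i) (h2 : i ≤ n) :
    1 ≤ (val β i).natAbs ∧ (val β i).natAbs ≤ n := by
  have := natAbs_val β h1 h2
  have := (β.1 ⟨i - 1, by omega⟩).isLt
  omega

lemma val_inj (β : HO n) {i j : ℕ} (hi1 : 1 ≤ i) (hi2 : i ≤ n) (hj1 : 1 ≤ j) (hj2 : j ≤ n)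
    (h : val β i = val β j) : i = j := by
  rw [val_def β hi1 hi2, val_def β hj1 hj2] at h
  have hfin : (⟨i - 1, by omega⟩ : Fin n) = ⟨j - 1, by omega⟩ := by
    apply β.1.injective
    apply Fin.ext
    split at h <;> split at h <;> omega
  have h3 : i - 1 = j - 1 := congrArg Fin.val hfin
  omega

lemma val_def' (β : HO n) {i : ℕ} (h1 : 1 ≤ i) (h2 : i ≤ n) (x : Fin n)
    (hx : (x : ℕ) = i - 1) :
    val β i = if β.2 x then -(((β.1 x : Fin n) : ℕ) + 1 : ℤ)
      else (((β.1 x : Fin n) : ℕ) + 1 : ℤ) := by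
  have hfe : (⟨i - 1, by omega⟩ : Fin n) = x := Fin.ext (by simp [hx])
  rw [val_def β h1 h2, hfe]

lemma val_inv (β : HO n) {i : ℕ} (h1 : 1 ≤ i) (h2 : i ≤ n) :
    val (inv β) (val β i).natAbs = if val β i < 0 then -(i : ℤ) else (i : ℤ) := by
  obtain ⟨x, hx⟩ : ∃ x : Fin n, (x : ℕ) = i - 1 := ⟨⟨i - 1, by omega⟩, rfl⟩
  have hv := val_def' β h1 h2 x hx
  have hna : (val β i).natAbs = ((β.1 x : Fin n) : ℕ) + 1 := by rw [hv]; split <;> omega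
  have hlt := (β.1 x).isLt
  rw [hna]
  have hv2 := val_def' (inv β) (i := ((β.1 x : Fin n) : ℕ) + 1) (by omega) (by omega)
      (β.1 x) (by omega)
  rw [hv2]
  have e1 : (inv β).1 (β.1 x) = x := Equiv.symm_apply_apply _ _
  have e2 : (inv β).2 (β.1 x) = β.2 x := congrArg β.2 (Equiv.symm_apply_apply _ _)
  rw [e1, e2]
  have hsign : val β i < 0 ↔ β.2 x = true := by
    rw [hv]; split <;> simp_all <;> omega
  by_cases hb : β.2 x = true
  · rw [if_pos hb, if_pos (hsign.2 hb)]
    push_cast; omega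
  · rw [if_neg hb, if_neg (fun hh => hb (hsign.1 hh))]
    push_cast; omega

lemma bprec_trans {a b c : ℤ} (h1 : bprec a b) (h2 : bprec b c) : bprec a c := by
  unfold bprec at *; omega

lemma bprec_total {a b : ℤ} (ha : a ≠ 0) (hb : b ≠ 0) (hab : a ≠ b) :
    bprec a b ∨ bprec b a := by
  unfold bprec; omega

lemma bprec_asymm {a b : ℤ} (h1 : bprec a b) (h2 : bprec b a) : False := by
  unfold bprec at *; omega

lemma bprec_pos {a b : ℤ} (h : bprec a b) (ha : 0 < a) (hb : 0 < b) : a < b := by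
  unfold bprec at h; omega

lemma bprec_neg {a b : ℤ} (h : bprec a b) (ha : a < 0) (hb : b < 0) : -a < -b := by
  unfold bprec at h; omega

lemma des_union_ris (γ : HO n) : Des γ ∪ Ris γ = Finset.Icc 1 (n - 1) := by
  apply Finset.Subset.antisymm
  · intro j hj
    simp only [Finset.mem_union, Des, Ris, Finset.mem_filter] at hj
    tauto
  · intro j hj
    have hj' := Finset.mem_Icc.1 hj
    have h1 : val γ j ≠ 0 := val_ne_zero γ (by omega) (by omega)
    have h2 : val γ (j + 1) ≠ 0 := val_ne_zero γ (by omega) (by omega)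
    have h3 : val γ j ≠ val γ (j + 1) := fun hh => by
      have := val_inj γ (by omega) (by omega) (by omega) (by omega) hh; omega
    simp only [Finset.mem_union, Des, Ris, Finset.mem_filter]
    rcases bprec_total h2 h1 (Ne.symm h3) with hh | hh
    · exact Or.inl ⟨hj, hh⟩
    · exact Or.inr ⟨hj, hh⟩

lemma des_disj_ris (γ : HO n) : Disjoint (Des γ) (Ris γ) := by
  rw [Finset.disjoint_left]
  intro j hd hr
  simp only [Des, Ris, Finset.mem_filter] at hd hr
  exact bprec_asymm hd.2 hr.2

lemma delta_add_mu (γ : HO n) {k : ℕ} (hk1 : 1 ≤ k) (hk2 : k ≤ n) :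
    ((Des γ).filter (fun j => j < k)).card + ((Ris γ).filter (fun j => j < k)).card = k - 1 := by
  classical
  rw [← Finset.card_union_of_disjoint
      (Finset.disjoint_filter_filter (des_disj_ris γ)), ← Finset.filter_union, des_union_ris]
  have h : (Finset.Icc 1 (n - 1)).filter (fun j => j < k) = Finset.Icc 1 (k - 1) := by
    ext j; simp only [Finset.mem_filter, Finset.mem_Icc]; omega
  rw [h, Nat.card_Icc]; omega

lemma chain_bprec (f : ℕ → ℤ) : ∀ b a : ℕ, a < b →
    (∀ k, a ≤ k → k < b → bprec (f k) (f (k + 1))) → bprec (f a) (f b) := by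
  intro b
  induction b with
  | zero => omega
  | succ b ih =>
    intro a hab h
    rcases Nat.lt_or_ge a b with h' | h'
    · exact bprec_trans (ih a h' fun k hk hk' => h k hk (by omega)) (h b (by omega) (by omega))
    · have : a = b := by omega
      subst this
      exact h a le_rfl (by omega)

lemma chain_bprec' (f : ℕ → ℤ) : ∀ b a : ℕ, a < b →
    (∀ k, a ≤ k → k < b → bprec (f (k + 1)) (f k)) → bprec (f b) (f a) := by
  intro b
  induction b with
  | zero => omega
  | succ b ih =>
    intro a hab h
    rcases Nat.lt_or_ge a b with h' | h'
    · exact bprec_trans (h b (by omega) (by omega)) (ih a h' fun k hk hk' => h k hk (by omega))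
    · have : a = b := by omega
      subst this
      exact h a le_rfl (by omega)

lemma not_mem_of_filter_card_eq {S : Finset ℕ} {i j k : ℕ}
    (h : (S.filter (fun x => x < i)).card = (S.filter (fun x => x < j)).card)
    (hk : i ≤ k) (hk2 : k < j) : k ∉ S := by
  classical
  intro hkS
  have hsub : S.filter (fun x => x < i) ⊆ S.filter (fun x => x < j) := by
    intro x hx
    simp only [Finset.mem_filter] at hx ⊢
    exact ⟨hx.1, by omega⟩
  have heq := Finset.eq_of_subset_of_card_le hsub (le_of_eq h.symm)
  have hmem : k ∈ S.filter (fun x => x < j) := Finset.mem_filter.2 ⟨hkS, hk2⟩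
  rw [← heq] at hmem
  have := (Finset.mem_filter.1 hmem).2
  omega

lemma bprec_of_delta_eq (γ : HO n) {i j : ℕ} (hi : 1 ≤ i) (hj : j ≤ n) (hij : i < j)
    (h : deltaStat γ i = deltaStat γ j) : bprec (val γ i) (val γ j) := by
  apply chain_bprec (val γ) j i hij
  intro k hk hk'
  have hknd : k ∉ Des γ := not_mem_of_filter_card_eq h hk hk'
  have h1 := val_ne_zero γ (show 1 ≤ k by omega) (show k ≤ n by omega)
  have h2 := val_ne_zero γ (show 1 ≤ k + 1 by omega) (show k + 1 ≤ n by omega)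
  have h3 : val γ k ≠ val γ (k + 1) := fun hh => by
    have := val_inj γ (by omega) (by omega) (by omega) (by omega) hh; omega
  rcases bprec_total h1 h2 h3 with hh | hh
  · exact hh
  · refine absurd ?_ hknd
    simp only [Des, Finset.mem_filter, Finset.mem_Icc]
    exact ⟨⟨by omega, by omega⟩, hh⟩

lemma bprec_of_mu_eq (γ : HO n) {i j : ℕ} (hi : 1 ≤ i) (hj : j ≤ n) (hij : i < j)
    (h : ((Ris γ).filter (fun x => x < i)).card = ((Ris γ).filter (fun x => x < j)).card) :
    bprec (val γ j) (val γ i) := by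
  apply chain_bprec' (val γ) j i hij
  intro k hk hk'
  have hknr : k ∉ Ris γ := not_mem_of_filter_card_eq h hk hk'
  have h1 := val_ne_zero γ (show 1 ≤ k by omega) (show k ≤ n by omega)
  have h2 := val_ne_zero γ (show 1 ≤ k + 1 by omega) (show k + 1 ≤ n by omega)
  have h3 : val γ k ≠ val γ (k + 1) := fun hh => by
    have := val_inj γ (by omega) (by omega) (by omega) (by omega) hh; omega
  rcases bprec_total h1 h2 h3 with hh | hh
  · refine absurd ?_ hknr
    simp only [Ris, Finset.mem_filter, Finset.mem_Icc]
    exact ⟨⟨by omega, by omega⟩, hh⟩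
  · exact hh

lemma key_inj (β : HO n) {i j : ℕ} (hi1 : 1 ≤ i) (hi2 : i ≤ n) (hj1 : 1 ≤ j) (hj2 : j ≤ n)
    (hij : i < j) (hg : gstat β i = gstat β j) (hh : ghat β i = ghat β j) : False := by
  have hvi := val_ne_zero β hi1 hi2
  have hvj := val_ne_zero β hj1 hj2
  have hbi : etaStat β i ≤ 1 ∧ etaStat β j ≤ 1 ∧ epsStat β i ≤ 1 ∧ epsStat β j ≤ 1 := by
    unfold etaStat epsStat
    refine ⟨?_, ?_, ?_, ?_⟩ <;> split <;> omega
  unfold gstat at hg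
  unfold ghat at hh
  have hδ : deltaStat β i = deltaStat β j := by omega
  have hη : etaStat β i = etaStat β j := by omega
  have hμ : muStat β (val β i).natAbs = muStat β (val β j).natAbs := by omega
  have hchain := bprec_of_delta_eq β hi1 hj2 hij hδ
  have ha := natAbs_val_mem β hi1 hi2
  have hb := natAbs_val_mem β hj1 hj2
  have hwa := val_inv β hi1 hi2
  have hwb := val_inv β hj1 hj2
  unfold muStat at hμ
  by_cases hsi : val β i < 0
  · have hsj : val β j < 0 := by
      unfold etaStat at hη
      split_ifs at hη <;> omega
    have hab : (val β i).natAbs < (val β j).natAbs := by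
      have := bprec_neg hchain hsi hsj; omega
    have hdesc := bprec_of_mu_eq (inv β) ha.1 hb.2 hab hμ
    rw [hwa, hwb, if_pos hsi, if_pos hsj] at hdesc
    have := bprec_neg hdesc (by omega) (by omega)
    omega
  · have hsj : ¬ val β j < 0 := by
      unfold etaStat at hη
      split_ifs at hη <;> omega
    have hab : (val β i).natAbs < (val β j).natAbs := by
      have := bprec_pos hchain (by omega) (by omega); omega
    have hdesc := bprec_of_mu_eq (inv β) ha.1 hb.2 hab hμ
    rw [hwa, hwb, if_neg hsi, if_neg hsj] at hdesc
    have := bprec_pos hdesc (by omega) (by omega)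
    omega

end HO

/-- `ψ(D_β) = D_β^s`.  Writing `σ(i) = |β(i)|` and `c_i(β) = 2σ(i) - 1`,
the second coordinates satisfy `ĝ_i(β) + g̃_i(β) = c_i(β)` (so `c(β) - g̃(β) = ĝ(β)`),
all cells `(g_i(β), ĝ_i(β))` have odd coordinate sum, and they are pairwise distinct. -/
theorem psi_compact_e_diagram_eq_compact_o_diagram (n : ℕ) (β : HO n) :
    (∀ i ∈ Finset.Icc 1 n,
        HO.ghat β i + HO.gstat (HO.inv β) (HO.val β i).natAbs
          = 2 * (HO.val β i).natAbs - 1) ∧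
    (∀ i ∈ Finset.Icc 1 n, (HO.gstat β i + HO.ghat β i) % 2 = 1) ∧
    (∀ i ∈ Finset.Icc 1 n, ∀ j ∈ Finset.Icc 1 n,
        (HO.gstat β i, HO.ghat β i) = (HO.gstat β j, HO.ghat β j) → i = j) := by
  refine ⟨?_, ?_, ?_⟩
  · intro i hi
    obtain ⟨hi1, hi2⟩ := Finset.mem_Icc.1 hi
    obtain ⟨hm1, hm2⟩ := HO.natAbs_val_mem β hi1 hi2
    have e1 : HO.ghat β i
        = 2 * ((HO.Ris (HO.inv β)).filter (fun k => k < (HO.val β i).natAbs)).card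
          + (if HO.val β i < 0 then 1 else 0) := rfl
    have e2 : HO.gstat (HO.inv β) (HO.val β i).natAbs
        = 2 * ((HO.Des (HO.inv β)).filter (fun j => j < (HO.val β i).natAbs)).card
          + (if 0 < HO.val (HO.inv β) (HO.val β i).natAbs then 1 else 0) := rfl
    have hsum := HO.delta_add_mu (HO.inv β) hm1 hm2
    have hw := HO.val_inv β hi1 hi2
    rw [e1, e2]
    by_cases hs : HO.val β i < 0
    · rw [if_pos hs] at hw ⊢
      rw [hw]
      rw [if_neg (by omega : ¬ (0:ℤ) < -(i:ℤ))]
      omega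
    · rw [if_neg hs] at hw ⊢
      rw [hw]
      rw [if_pos (by exact_mod_cast Nat.lt_of_lt_of_le Nat.zero_lt_one hi1 : (0:ℤ) < (i:ℤ))]
      omega
  · intro i hi
    obtain ⟨hi1, hi2⟩ := Finset.mem_Icc.1 hi
    have h0 := HO.val_ne_zero β hi1 hi2
    unfold HO.gstat HO.ghat HO.etaStat HO.epsStat
    split_ifs <;> omega
  · intro i hi j hj h
    obtain ⟨hi1, hi2⟩ := Finset.mem_Icc.1 hi
    obtain ⟨hj1, hj2⟩ := Finset.mem_Icc.1 hj
    have h1 : HO.gstat β i = HO.gstat β j := congrArg Prod.fst h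
    have h2 : HO.ghat β i = HO.ghat β j := congrArg Prod.snd h
    rcases lt_trichotomy i j with h' | h' | h'
    · exact (HO.key_inj β hi1 hi2 hj1 hj2 h' h1 h2).elim
    · exact h'
    · exact (HO.key_inj β hj1 hj2 hi1 hi2 h' h1.symm h2.symm).elim
end
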